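/- Let ξ be a countable ordinal, M an infinite subset of ℕ, and ℒ a ξ-uniform family on M. Then for every infinite subset L of M, (ℒ_*)^ξ_L = {∅} and s_L(ℒ_*) = ξ + 1. -/

import Mathlib

open Ordinal Filter Set

/-- `FinLT s t` : every element of `s` is smaller than every element of `t`
(i.e. `max s < min t`, vacuously true if one of them is empty). -/
def FinLT (s t : Finset ℕ) : Prop := ∀ a ∈ s, ∀ b ∈ t, a < b

/-- `s` is an initial segment of `t`  (`s ⪯ t`). -/
def InitSeg (s t : Finset ℕ) : Prop :=
  s ⊆ t ∧ ∀ a ∈ t, ∀ b ∈ s, a ≤ b → a ∈ s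

/-- `s` is a proper initial segment of `t`  (`s ≺ t`). -/
def PInitSeg (s t : Finset ℕ) : Prop := InitSeg s t ∧ s ≠ t

/-- `[M]^{<ω}` : the finite subsets of `M`. -/
def FinSubs (M : Set ℕ) : Set (Finset ℕ) := {s | ↑s ⊆ M}

/-- `ℒ(m) = {s : {m} ∪ s ∈ ℒ and {m} < s}`. -/
def famAt (L : Set (Finset ℕ)) (m : ℕ) : Set (Finset ℕ) :=
  {s | insert m s ∈ L ∧ ∀ a ∈ s, m < a}

/-- `ℒ*` : the family of initial segments of elements of `ℒ`. -/
def famStar (L : Set (Finset ℕ)) : Set (Finset ℕ) := {t | ∃ s ∈ L, InitSeg t s}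

/-- `ℒ_*` : the family of subsets of elements of `ℒ`. -/
def famSub (L : Set (Finset ℕ)) : Set (Finset ℕ) := {t | ∃ s ∈ L, t ⊆ s}

/-- A family is Sperner if no element is a proper subset of another. -/
def Sperner (L : Set (Finset ℕ)) : Prop := ¬ ∃ s ∈ L, ∃ t ∈ L, s ⊂ t

/-- A family is hereditary if it is closed under taking subsets. -/
def Hereditary (F : Set (Finset ℕ)) : Prop := ∀ s ∈ F, ∀ t ⊆ s, t ∈ F

/-- `IsUniform ξ ℒ M` : `ℒ` is a `ξ`-uniform family on `M`. -/
inductive IsUniform : Ordinal.{0} → Set (Finset ℕ) → Set ℕ → Prop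
  | zero (M : Set ℕ) : IsUniform 0 {(∅ : Finset ℕ)} M
  | succ (ζ : Ordinal.{0}) (L : Set (Finset ℕ)) (M : Set ℕ)
      (hsub : L ⊆ FinSubs M) (hne : (∅ : Finset ℕ) ∉ L)
      (h : ∀ m ∈ M, IsUniform ζ (famAt L m) (M ∩ Set.Ioi m)) :
      IsUniform (ζ + 1) L M
  | limit (ξ : Ordinal.{0}) (L : Set (Finset ℕ)) (M : Set ℕ)
      (hlim : Order.IsSuccLimit ξ)
      (hsub : L ⊆ FinSubs M) (hne : (∅ : Finset ℕ) ∉ L)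
      (ξm : ℕ → Ordinal.{0})
      (hmono : ∀ m ∈ M, ∀ n ∈ M, m < n → ξm m < ξm n)
      (hlt : ∀ m ∈ M, ξm m < ξ)
      (hsup : ∀ β < ξ, ∃ m ∈ M, β ≤ ξm m)
      (h : ∀ m ∈ M, IsUniform (ξm m) (famAt L m) (M ∩ Set.Ioi m)) :
      IsUniform ξ L M

/-- The characteristic function of a finite set, as an element of the
product space `ℕ → Bool` (i.e. `2^ℕ`). -/
def toChar (s : Finset ℕ) : ℕ → Bool := fun n => decide (n ∈ s)

/-- A family of finite subsets of `ℕ` is pointwise closed if its image in `2^ℕ`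
(under characteristic functions) is closed in the product topology. -/
def PtwiseClosed (F : Set (Finset ℕ)) : Prop := IsClosed (toChar '' F)

/-- The first strong Cantor--Bendixson derivative of `F` on `M`:
the set of `A ∈ F ∩ [M]^{<ω}` such that `A` is a cluster point (in `2^ℕ`) of
`{B ∈ F : B ⊆ A ∪ L}` for every infinite `L ⊆ M`. -/
def derivOne (M : Set ℕ) (F : Set (Finset ℕ)) : Set (Finset ℕ) :=
  {A | A ∈ F ∧ ↑A ⊆ M ∧ ∀ L : Set ℕ, L ⊆ M → L.Infinite →
    AccPt (toChar A) (𝓟 (toChar '' {B | B ∈ F ∧ ↑B ⊆ ↑A ∪ L}))}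

/-- The iterated strong Cantor--Bendixson derivatives `(F)^ξ_M`. -/
noncomputable def CBDeriv (F : Set (Finset ℕ)) (M : Set ℕ) (o : Ordinal.{0}) :
    Set (Finset ℕ) :=
  Ordinal.limitRecOn o F (fun _ ih => derivOne M ih)
    (fun o _ ih => ⋂ (β : Ordinal.{0}) (h : β < o), ih β h)

/-- The strong Cantor--Bendixson index `s_M(F)` : the least ordinal `ξ`
with `(F)^ξ_M = ∅`. -/
noncomputable def CBIndex (F : Set (Finset ℕ)) (M : Set ℕ) : Ordinal.{0} :=
  sInf {o : Ordinal.{0} | CBDeriv F M o = ∅}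


/-! ### Auxiliary lemmas -/

open Topology

section Aux

lemma toChar_injective : Function.Injective toChar := by
  intro s t h
  ext n
  have h' := congrFun h n
  simpa [toChar, decide_eq_decide] using h'

lemma infinite_inter_Ioi {M : Set ℕ} (hM : M.Infinite) (a : ℕ) : (M ∩ Set.Ioi a).Infinite := by
  have he : M ∩ Set.Ioi a = M \ Set.Iic a := by
    ext x
    simp only [Set.mem_inter_iff, Set.mem_Ioi, Set.mem_diff, Set.mem_Iic, not_le]
  rw [he]
  exact hM.diff (Set.finite_Iic a)

lemma cyl_mem_nhds (x : ℕ → Bool) (n : ℕ) :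
    {y : ℕ → Bool | ∀ i < n, y i = x i} ∈ 𝓝 x := by
  have hopen : IsOpen {y : ℕ → Bool | ∀ i < n, y i = x i} := by
    have he : {y : ℕ → Bool | ∀ i < n, y i = x i}
        = ⋂ i ∈ Finset.range n, (fun y : ℕ → Bool => y i) ⁻¹' ({x i} : Set Bool) := by
      ext y; simp [Finset.mem_range]
    rw [he]
    exact isOpen_biInter_finset fun i _ =>
      (isOpen_discrete ({x i} : Set Bool)).preimage (continuous_apply i)
  exact hopen.mem_nhds (by simp)

lemma exists_cyl_subset {x : ℕ → Bool} {U : Set (ℕ → Bool)} (hU : U ∈ 𝓝 x) :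
    ∃ n, {y : ℕ → Bool | ∀ i < n, y i = x i} ⊆ U := by
  rw [nhds_pi, Filter.mem_pi] at hU
  obtain ⟨I, hIfin, t, ht, hsub⟩ := hU
  obtain ⟨n, hn⟩ := hIfin.bddAbove
  refine ⟨n + 1, fun y hy => hsub fun i hi => ?_⟩
  have hyi : y i = x i := hy i (Nat.lt_succ_of_le (hn hi))
  rw [hyi]
  exact mem_of_mem_nhds (ht i)

lemma famAt_empty (m : ℕ) : famAt (∅ : Set (Finset ℕ)) m = ∅ := by
  ext s; simp [famAt]

lemma famAt_singleton (m : ℕ) : famAt ({(∅ : Finset ℕ)} : Set (Finset ℕ)) m = ∅ := by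
  ext s; simp [famAt, Finset.insert_ne_empty]

lemma uniform_nonempty {ξ : Ordinal.{0}} {𝓛 : Set (Finset ℕ)} {M : Set ℕ}
    (h : IsUniform ξ 𝓛 M) : M.Infinite → 𝓛.Nonempty := by
  induction h with
  | zero M => exact fun _ => ⟨∅, rfl⟩
  | succ ζ 𝓛 M hsub hne h IH =>
      intro hM
      obtain ⟨m, hm⟩ := hM.nonempty
      obtain ⟨u, hu⟩ := IH m hm (infinite_inter_Ioi hM m)
      exact ⟨insert m u, hu.1⟩
  | limit ξ 𝓛 M hlim hsub hne ξm hmono hlt hsup h IH =>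
      intro hM
      obtain ⟨m, hm⟩ := hM.nonempty
      obtain ⟨u, hu⟩ := IH m hm (infinite_inter_Ioi hM m)
      exact ⟨insert m u, hu.1⟩

lemma uniform_mem_subset {ξ : Ordinal.{0}} {𝓛 : Set (Finset ℕ)} {M : Set ℕ}
    (h : IsUniform ξ 𝓛 M) {s : Finset ℕ} (hs : s ∈ 𝓛) : ↑s ⊆ M := by
  cases h with
  | zero =>
      rw [Set.mem_singleton_iff] at hs
      subst hs; simp
  | succ ζ _ _ hsub _ _ => exact hsub hs
  | limit _ _ _ _ hsub _ _ _ _ _ _ => exact hsub hs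

lemma uniform_cases {ξ : Ordinal.{0}} {𝓛 : Set (Finset ℕ)} {M : Set ℕ}
    (h : IsUniform ξ 𝓛 M) (m : ℕ) (hm : m ∈ M) :
    (ξ = 0 ∧ 𝓛 = {(∅ : Finset ℕ)}) ∨
      ∃ δ, δ < ξ ∧ IsUniform δ (famAt 𝓛 m) (M ∩ Set.Ioi m) := by
  cases h with
  | zero => exact Or.inl ⟨rfl, rfl⟩
  | succ ζ _ _ _ _ h =>
      refine Or.inr ⟨ζ, ?_, h m hm⟩
      rw [Ordinal.add_one_eq_succ]
      exact Order.lt_succ ζ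
  | limit ξ₂ _ _ hlim hsub hne ξm hmono hlt hsup h => exact Or.inr ⟨ξm m, hlt m hm, h m hm⟩

lemma uniform_rank_unique {ξ : Ordinal.{0}} {𝓛 : Set (Finset ℕ)} {M : Set ℕ}
    (h1 : IsUniform ξ 𝓛 M) :
    ∀ ξ' : Ordinal.{0}, M.Infinite → IsUniform ξ' 𝓛 M → ξ = ξ' := by
  induction h1 with
  | zero M =>
      intro ξ' hM h2
      cases h2 with
      | zero => rfl
      | succ ζ₂ _ _ hsub2 hne2 h2' => exact absurd rfl hne2
      | limit ξ₂ _ _ hlim2 hsub2 hne2 ξm2 hmono2 hlt2 hsup2 h2' => exact absurd rfl hne2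
  | succ ζ 𝓛 M hsub hne h IH =>
      intro ξ' hM h2
      cases h2 with
      | zero => exact absurd rfl hne
      | succ ζ₂ _ _ hsub2 hne2 h2' =>
          obtain ⟨m, hm⟩ := hM.nonempty
          rw [IH m hm ζ₂ (infinite_inter_Ioi hM m) (h2' m hm)]
      | limit ξ₂ _ _ hlim2 hsub2 hne2 ξm2 hmono2 hlt2 hsup2 h2' =>
          obtain ⟨m, hm⟩ := hM.nonempty
          obtain ⟨m', hm', hmm'⟩ := hM.exists_gt m
          have e1 : ζ = ξm2 m := IH m hm _ (infinite_inter_Ioi hM m) (h2' m hm)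
          have e2 : ζ = ξm2 m' := IH m' hm' _ (infinite_inter_Ioi hM m') (h2' m' hm')
          exact absurd (hmono2 m hm m' hm' hmm') (by rw [← e1, ← e2]; exact lt_irrefl ζ)
  | limit ξ₁ 𝓛 M hlim hsub hne ξm hmono hlt hsup h IH =>
      intro ξ' hM h2
      cases h2 with
      | zero => exact absurd rfl hne
      | succ ζ₂ _ _ hsub2 hne2 h2' =>
          obtain ⟨m, hm⟩ := hM.nonempty
          obtain ⟨m', hm', hmm'⟩ := hM.exists_gt m
          have e1 : ξm m = ζ₂ := IH m hm _ (infinite_inter_Ioi hM m) (h2' m hm)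
          have e2 : ξm m' = ζ₂ := IH m' hm' _ (infinite_inter_Ioi hM m') (h2' m' hm')
          exact absurd (hmono m hm m' hm' hmm') (by rw [e1, e2]; exact lt_irrefl ζ₂)
      | limit ξ₂ _ _ hlim2 hsub2 hne2 ξm2 hmono2 hlt2 hsup2 h2' =>
          have key : ∀ m ∈ M, ξm m = ξm2 m := fun m hm =>
            IH m hm _ (infinite_inter_Ioi hM m) (h2' m hm)
          rcases lt_trichotomy ξ₁ ξ' with hlt12 | he | hgt
          · obtain ⟨m, hm, hle⟩ := hsup2 ξ₁ hlt12
            rw [← key m hm] at hle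
            exact absurd (hlt m hm) (not_lt.2 hle)
          · exact he
          · obtain ⟨m, hm, hle⟩ := hsup ξ' hgt
            rw [key m hm] at hle
            exact absurd (hlt2 m hm) (not_lt.2 hle)

lemma uniform_zero_aux {ξ : Ordinal.{0}} {𝓛 : Set (Finset ℕ)} {M : Set ℕ}
    (h : IsUniform ξ 𝓛 M) : ξ = 0 → 𝓛 = {(∅ : Finset ℕ)} := by
  cases h with
  | zero => exact fun _ => rfl
  | succ ζ _ _ hsub hne h =>
      intro h0
      rw [Ordinal.add_one_eq_succ] at h0
      exact absurd h0 (Ordinal.succ_ne_zero ζ)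
  | limit ξ₂ _ _ hlim hsub hne ξm hmono hlt hsup h =>
      intro h0
      exact absurd h0 hlim.pos.ne'

lemma exists_child_rank {γ : Ordinal.{0}} {𝓡 : Set (Finset ℕ)} {M' : Set ℕ}
    (h : IsUniform γ 𝓡 M') {β : Ordinal.{0}} (hβ : β < γ)
    {N : Set ℕ} (hN : N ⊆ M') (hNinf : N.Infinite) (n : ℕ) :
    ∃ x ∈ N, n < x ∧ ∃ δ, β ≤ δ ∧ IsUniform δ (famAt 𝓡 x) (M' ∩ Set.Ioi x) := by
  cases h with
  | zero => exact absurd hβ (zero_le (a := β)).not_gt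
  | succ ζ _ _ hsub hne h =>
      obtain ⟨x, hx, hnx⟩ := hNinf.exists_gt n
      refine ⟨x, hx, hnx, ζ, ?_, h x (hN hx)⟩
      rw [Ordinal.add_one_eq_succ, Order.lt_succ_iff] at hβ
      exact hβ
  | limit ξ₂ _ _ hlim hsub hne ξm hmono hlt hsup h =>
      obtain ⟨m, hm, hβm⟩ := hsup β hβ
      obtain ⟨x, hx, hnx⟩ := hNinf.exists_gt (max n m)
      refine ⟨x, hx, lt_of_le_of_lt (le_max_left _ _) hnx, ξm x, ?_, h x (hN hx)⟩
      exact hβm.trans (hmono m hm x (hN hx) (lt_of_le_of_lt (le_max_right _ _) hnx)).le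

/-- `Res 𝓛 M A 𝓡 M'` : the family `𝓡` on `M'` is obtained from `𝓛` on `M` by
successively passing to `famAt` at an increasing sequence of anchors, consuming
exactly the set `A` (anchors in `A` are "cons"ed, others are "skip"ped). -/
inductive Res : Set (Finset ℕ) → Set ℕ → Finset ℕ → Set (Finset ℕ) → Set ℕ → Prop
  | refl (𝓛 : Set (Finset ℕ)) (M : Set ℕ) : Res 𝓛 M ∅ 𝓛 M
  | skip {𝓛 : Set (Finset ℕ)} {M : Set ℕ} {A : Finset ℕ} {𝓡 : Set (Finset ℕ)} {M' : Set ℕ}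
      (m₀ : ℕ) (hm : m₀ ∈ M) (hA : ∀ a ∈ A, m₀ < a)
      (h : Res (famAt 𝓛 m₀) (M ∩ Set.Ioi m₀) A 𝓡 M') : Res 𝓛 M A 𝓡 M'
  | cons {𝓛 : Set (Finset ℕ)} {M : Set ℕ} {A : Finset ℕ} {𝓡 : Set (Finset ℕ)} {M' : Set ℕ}
      (m₀ : ℕ) (hm : m₀ ∈ M) (hA : ∀ a ∈ A, m₀ < a)
      (h : Res (famAt 𝓛 m₀) (M ∩ Set.Ioi m₀) A 𝓡 M') : Res 𝓛 M (insert m₀ A) 𝓡 M'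

lemma Res.ground_subset {𝓛 : Set (Finset ℕ)} {M : Set ℕ} {A : Finset ℕ}
    {𝓡 : Set (Finset ℕ)} {M' : Set ℕ} (h : Res 𝓛 M A 𝓡 M') : M' ⊆ M := by
  induction h with
  | refl => exact subset_rfl
  | skip m₀ hm hA h IH => exact IH.trans Set.inter_subset_left
  | cons m₀ hm hA h IH => exact IH.trans Set.inter_subset_left

lemma Res.ground_cofinal {𝓛 : Set (Finset ℕ)} {M : Set ℕ} {A : Finset ℕ}
    {𝓡 : Set (Finset ℕ)} {M' : Set ℕ} (h : Res 𝓛 M A 𝓡 M') :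
    ∃ a : ℕ, M ∩ Set.Ioi a ⊆ M' := by
  induction h with
  | refl => exact ⟨0, Set.inter_subset_left⟩
  | skip m₀ hm hA h IH =>
      obtain ⟨a, ha⟩ := IH
      exact ⟨max m₀ a, fun x hx => ha ⟨⟨hx.1, (lt_of_le_of_lt (le_max_left m₀ a) (Set.mem_Ioi.1 hx.2) : m₀ < x)⟩,
        (lt_of_le_of_lt (le_max_right m₀ a) (Set.mem_Ioi.1 hx.2) : a < x)⟩⟩
  | cons m₀ hm hA h IH =>
      obtain ⟨a, ha⟩ := IH
      exact ⟨max m₀ a, fun x hx => ha ⟨⟨hx.1, (lt_of_le_of_lt (le_max_left m₀ a) (Set.mem_Ioi.1 hx.2) : m₀ < x)⟩,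
        (lt_of_le_of_lt (le_max_right m₀ a) (Set.mem_Ioi.1 hx.2) : a < x)⟩⟩

lemma Res.ground_infinite {𝓛 : Set (Finset ℕ)} {M : Set ℕ} {A : Finset ℕ}
    {𝓡 : Set (Finset ℕ)} {M' : Set ℕ} (h : Res 𝓛 M A 𝓡 M') (hM : M.Infinite) :
    M'.Infinite := by
  obtain ⟨a, ha⟩ := h.ground_cofinal
  exact Set.Infinite.mono ha (infinite_inter_Ioi hM a)

lemma Res.start_empty {𝓛 : Set (Finset ℕ)} {M : Set ℕ} {A : Finset ℕ}
    {𝓡 : Set (Finset ℕ)} {M' : Set ℕ} (h : Res 𝓛 M A 𝓡 M') : 𝓛 = ∅ → 𝓡 = ∅ := by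
  induction h with
  | refl => exact id
  | skip m₀ hm hA h IH => exact fun h0 => IH (by rw [h0, famAt_empty])
  | cons m₀ hm hA h IH => exact fun h0 => IH (by rw [h0, famAt_empty])

lemma Res.rank_le {𝓛 : Set (Finset ℕ)} {M : Set ℕ} {A : Finset ℕ}
    {𝓡 : Set (Finset ℕ)} {M' : Set ℕ} (h : Res 𝓛 M A 𝓡 M') :
    ∀ ξ γ : Ordinal.{0}, M.Infinite → IsUniform ξ 𝓛 M → IsUniform γ 𝓡 M' →
      γ ≤ ξ ∧ (A.Nonempty → γ < ξ) := by
  induction h with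
  | refl 𝓛 M =>
      intro ξ γ hM h1 h2
      refine ⟨le_of_eq (uniform_rank_unique h2 ξ hM h1), fun hA => absurd hA (by simp)⟩
  | skip m₀ hm hA h IH =>
      intro ξ γ hM h1 h2
      rcases uniform_cases h1 m₀ hm with ⟨hξ0, h𝓛e⟩ | ⟨δ, hδξ, hδ⟩
      · exfalso
        have h𝓡e := h.start_empty (by rw [h𝓛e, famAt_singleton])
        obtain ⟨s, hs⟩ := uniform_nonempty h2 (h.ground_infinite (infinite_inter_Ioi hM m₀))
        rw [h𝓡e] at hs
        exact hs
      · have key := IH δ γ (infinite_inter_Ioi hM m₀) hδ h2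
        exact ⟨key.1.trans hδξ.le, fun _ => lt_of_le_of_lt key.1 hδξ⟩
  | cons m₀ hm hA h IH =>
      intro ξ γ hM h1 h2
      rcases uniform_cases h1 m₀ hm with ⟨hξ0, h𝓛e⟩ | ⟨δ, hδξ, hδ⟩
      · exfalso
        have h𝓡e := h.start_empty (by rw [h𝓛e, famAt_singleton])
        obtain ⟨s, hs⟩ := uniform_nonempty h2 (h.ground_infinite (infinite_inter_Ioi hM m₀))
        rw [h𝓡e] at hs
        exact hs
      · have key := IH δ γ (infinite_inter_Ioi hM m₀) hδ h2
        exact ⟨key.1.trans hδξ.le, fun _ => lt_of_le_of_lt key.1 hδξ⟩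

lemma Res.uniform_or_empty {𝓛 : Set (Finset ℕ)} {M : Set ℕ} {A : Finset ℕ}
    {𝓡 : Set (Finset ℕ)} {M' : Set ℕ} (h : Res 𝓛 M A 𝓡 M') :
    ∀ ξ : Ordinal.{0}, M.Infinite → IsUniform ξ 𝓛 M →
      𝓡 = ∅ ∨ ∃ τ : Ordinal.{0}, IsUniform τ 𝓡 M' := by
  induction h with
  | refl 𝓛 M => exact fun ξ hM h1 => Or.inr ⟨ξ, h1⟩
  | skip m₀ hm hA h IH =>
      intro ξ hM h1
      rcases uniform_cases h1 m₀ hm with ⟨_, h𝓛e⟩ | ⟨δ, _, hδ⟩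
      · exact Or.inl (h.start_empty (by rw [h𝓛e, famAt_singleton]))
      · exact IH δ (infinite_inter_Ioi hM m₀) hδ
  | cons m₀ hm hA h IH =>
      intro ξ hM h1
      rcases uniform_cases h1 m₀ hm with ⟨_, h𝓛e⟩ | ⟨δ, _, hδ⟩
      · exact Or.inl (h.start_empty (by rw [h𝓛e, famAt_singleton]))
      · exact IH δ (infinite_inter_Ioi hM m₀) hδ

lemma Res.append {𝓛 : Set (Finset ℕ)} {M : Set ℕ} {A : Finset ℕ}
    {𝓡 : Set (Finset ℕ)} {M' : Set ℕ} (h : Res 𝓛 M A 𝓡 M') :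
    ∀ (A' : Finset ℕ) (𝓡'' : Set (Finset ℕ)) (M'' : Set ℕ),
      Res 𝓡 M' A' 𝓡'' M'' → ↑A' ⊆ M' → Res 𝓛 M (A ∪ A') 𝓡'' M'' := by
  induction h with
  | refl 𝓛 M =>
      intro A' 𝓡'' M'' h2 hsub
      simpa using h2
  | skip m₀ hm hA h IH =>
      intro A' 𝓡'' M'' h2 hsub
      refine Res.skip m₀ hm ?_ (IH A' 𝓡'' M'' h2 hsub)
      intro a ha
      rcases Finset.mem_union.1 ha with ha | ha
      · exact hA a ha
      · exact (h.ground_subset (hsub ha)).2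
  | cons m₀ hm hA h IH =>
      rename_i 𝓛₁ M₁ A₁ 𝓡₁ M'₁
      intro A' 𝓡'' M'' h2 hsub
      have he : insert m₀ A₁ ∪ A' = insert m₀ (A₁ ∪ A') := by
        ext a
        simp only [Finset.mem_union, Finset.mem_insert]
        tauto
      rw [he]
      refine Res.cons m₀ hm ?_ (IH A' 𝓡'' M'' h2 hsub)
      intro a ha
      rcases Finset.mem_union.1 ha with ha | ha
      · exact hA a ha
      · exact (h.ground_subset (hsub ha)).2

lemma Res.trunc {𝓛 : Set (Finset ℕ)} {M : Set ℕ} {B : Finset ℕ}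
    {𝓡 : Set (Finset ℕ)} {M'' : Set ℕ} (h : Res 𝓛 M B 𝓡 M'') :
    ∀ x₀ ∈ B, ∃ (𝓢 : Set (Finset ℕ)) (M₀ : Set ℕ),
      Res 𝓛 M (B.filter (· < x₀)) 𝓢 M₀ ∧ x₀ ∈ M₀ ∧
        Res (famAt 𝓢 x₀) (M₀ ∩ Set.Ioi x₀) (B.filter (fun b => x₀ < b)) 𝓡 M'' := by
  induction h with
  | refl 𝓛 M =>
      intro x₀ hx₀
      simp at hx₀
  | skip m₀ hm hA h IH =>
      intro x₀ hx₀
      obtain ⟨𝓢, M₀, h1, h2, h3⟩ := IH x₀ hx₀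
      exact ⟨𝓢, M₀, Res.skip m₀ hm (fun a ha => hA a (Finset.mem_filter.1 ha).1) h1, h2, h3⟩
  | cons m₀ hm hA h IH =>
      rename_i 𝓛₁ M₁ A₁ 𝓡₁ Mx₁
      intro x₀ hx₀
      rcases Finset.mem_insert.1 hx₀ with rfl | hx₀
      · refine ⟨𝓛₁, M₁, ?_, hm, ?_⟩
        · have he : (insert x₀ A₁).filter (· < x₀) = ∅ := by
            ext a
            simp only [Finset.mem_filter, Finset.mem_insert, Finset.notMem_empty, iff_false,
              not_and]
            rintro (rfl | ha)
            · exact lt_irrefl _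
            · exact fun hlt => absurd (hA a ha) (not_lt.2 hlt.le)
          rw [he]
          exact Res.refl 𝓛₁ M₁
        · have he : (insert x₀ A₁).filter (fun b => x₀ < b) = A₁ := by
            ext a
            simp only [Finset.mem_filter, Finset.mem_insert]
            constructor
            · rintro ⟨rfl | ha, hlt⟩
              · exact absurd hlt (lt_irrefl _)
              · exact ha
            · intro ha
              exact ⟨Or.inr ha, hA a ha⟩
          rw [he]
          exact h
      · have hm₀x₀ : m₀ < x₀ := hA x₀ hx₀
        obtain ⟨𝓢, M₀, h1, h2, h3⟩ := IH x₀ hx₀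
        refine ⟨𝓢, M₀, ?_, h2, ?_⟩
        · have he : (insert m₀ A₁).filter (· < x₀) = insert m₀ (A₁.filter (· < x₀)) := by
            ext a
            simp only [Finset.mem_filter, Finset.mem_insert]
            constructor
            · rintro ⟨rfl | ha, hlt⟩
              · exact Or.inl rfl
              · exact Or.inr ⟨ha, hlt⟩
            · rintro (rfl | ⟨ha, hlt⟩)
              · exact ⟨Or.inl rfl, hm₀x₀⟩
              · exact ⟨Or.inr ha, hlt⟩
          rw [he]
          exact Res.cons m₀ hm (fun a ha => hA a (Finset.mem_filter.1 ha).1) h1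
        · have he : (insert m₀ A₁).filter (fun b => x₀ < b) = A₁.filter (fun b => x₀ < b) := by
            ext a
            simp only [Finset.mem_filter, Finset.mem_insert]
            constructor
            · rintro ⟨rfl | ha, hlt⟩
              · exact absurd hlt (not_lt.2 hm₀x₀.le)
              · exact ⟨ha, hlt⟩
            · rintro ⟨ha, hlt⟩
              exact ⟨Or.inr ha, hlt⟩
          rw [he]
          exact h3

lemma Res.mem_famSub {𝓛 : Set (Finset ℕ)} {M : Set ℕ} {A : Finset ℕ}
    {𝓡 : Set (Finset ℕ)} {M' : Set ℕ} (h : Res 𝓛 M A 𝓡 M') :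
    𝓡.Nonempty → A ∈ famSub 𝓛 := by
  induction h with
  | refl 𝓛 M =>
      rintro ⟨s, hs⟩
      exact ⟨s, hs, Finset.empty_subset s⟩
  | skip m₀ hm hA h IH =>
      intro hne
      obtain ⟨u, hu, hAu⟩ := IH hne
      exact ⟨insert m₀ u, hu.1, hAu.trans (Finset.subset_insert _ _)⟩
  | cons m₀ hm hA h IH =>
      intro hne
      obtain ⟨u, hu, hAu⟩ := IH hne
      exact ⟨insert m₀ u, hu.1, Finset.insert_subset_insert _ hAu⟩

lemma Res.inv_nonempty {𝓛 : Set (Finset ℕ)} {M : Set ℕ} {A : Finset ℕ}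
    {𝓡 : Set (Finset ℕ)} {M' : Set ℕ} (h : Res 𝓛 M A 𝓡 M') (hA : A.Nonempty) :
    ∃ m₀ ∈ M, (∀ a ∈ A, m₀ ≤ a) ∧
      Res (famAt 𝓛 m₀) (M ∩ Set.Ioi m₀) (A.filter (fun a => m₀ < a)) 𝓡 M' := by
  cases h with
  | refl => simp at hA
  | skip m₀ hm hA' h =>
      refine ⟨m₀, hm, fun a ha => (hA' a ha).le, ?_⟩
      rwa [Finset.filter_true_of_mem hA']
  | cons m₀ hm hA' h =>
      rename_i A₁
      refine ⟨m₀, hm, ?_, ?_⟩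
      · intro a ha
        rcases Finset.mem_insert.1 ha with rfl | ha
        · exact le_rfl
        · exact (hA' a ha).le
      · have he : (insert m₀ A₁).filter (fun a => m₀ < a) = A₁ := by
          ext a
          simp only [Finset.mem_filter, Finset.mem_insert]
          constructor
          · rintro ⟨rfl | ha, hlt⟩
            · exact absurd hlt (lt_irrefl _)
            · exact ha
          · intro ha
            exact ⟨Or.inr ha, hA' a ha⟩
        rw [he]
        exact h

/-- `RankGE 𝓛 M A β` : some residual family of `𝓛` along `A` is `γ`-uniform with `β ≤ γ`. -/
def RankGE (𝓛 : Set (Finset ℕ)) (M : Set ℕ) (A : Finset ℕ) (β : Ordinal.{0}) : Prop :=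
  ∃ (𝓡 : Set (Finset ℕ)) (M' : Set ℕ) (γ : Ordinal.{0}),
    Res 𝓛 M A 𝓡 M' ∧ IsUniform γ 𝓡 M' ∧ β ≤ γ

lemma RankGE.mono {𝓛 : Set (Finset ℕ)} {M : Set ℕ} {A : Finset ℕ} {β β' : Ordinal.{0}}
    (h : RankGE 𝓛 M A β) (hle : β' ≤ β) : RankGE 𝓛 M A β' := by
  obtain ⟨𝓡, M', γ, h1, h2, h3⟩ := h
  exact ⟨𝓡, M', γ, h1, h2, hle.trans h3⟩

lemma rankGE_of_subset : ∀ (n : ℕ) {ξ : Ordinal.{0}} {𝓛 : Set (Finset ℕ)} {M : Set ℕ},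
    IsUniform ξ 𝓛 M → M.Infinite → ∀ s ∈ 𝓛, s.card = n → ∀ A ⊆ s, RankGE 𝓛 M A 0 := by
  intro n
  induction n with
  | zero =>
      intro ξ 𝓛 M h𝓛 hM s hs hcard A hA
      have hs0 : s = ∅ := Finset.card_eq_zero.1 hcard
      subst hs0
      have hA0 : A = ∅ := Finset.subset_empty.1 hA
      subst hA0
      exact ⟨𝓛, M, ξ, Res.refl 𝓛 M, h𝓛, zero_le (a := ξ)⟩
  | succ n IH =>
      intro ξ 𝓛 M h𝓛 hM s hs hcard A hA
      have hsne : s.Nonempty := by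
        rw [← Finset.card_pos, hcard]; omega
      have hm₀s : s.min' hsne ∈ s := s.min'_mem hsne
      have hm₀M : s.min' hsne ∈ M := uniform_mem_subset h𝓛 hs hm₀s
      rcases uniform_cases h𝓛 (s.min' hsne) hm₀M with ⟨h0, h𝓛e⟩ | ⟨δ, hδξ, hδ⟩
      · exfalso
        rw [h𝓛e, Set.mem_singleton_iff] at hs
        rw [hs] at hcard
        simp at hcard
      · have hs' : s.erase (s.min' hsne) ∈ famAt 𝓛 (s.min' hsne) := by
          refine ⟨?_, ?_⟩
          · rwa [Finset.insert_erase hm₀s]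
          · intro a ha
            exact lt_of_le_of_ne (s.min'_le a (Finset.mem_of_mem_erase ha))
              (Finset.ne_of_mem_erase ha).symm
        have hcard' : (s.erase (s.min' hsne)).card = n := by
          rw [Finset.card_erase_of_mem hm₀s, hcard]
          omega
        have hAsub : A.erase (s.min' hsne) ⊆ s.erase (s.min' hsne) :=
          Finset.erase_subset_erase _ hA
        obtain ⟨𝓡, M', γ, hres, huni, h0γ⟩ :=
          IH hδ (infinite_inter_Ioi hM (s.min' hsne)) _ hs' hcard' _ hAsub
        have hside : ∀ a ∈ A.erase (s.min' hsne), s.min' hsne < a := by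
          intro a ha
          exact lt_of_le_of_ne (s.min'_le a (hA (Finset.mem_of_mem_erase ha)))
            (Finset.ne_of_mem_erase ha).symm
        by_cases hmA : s.min' hsne ∈ A
        · refine ⟨𝓡, M', γ, ?_, huni, h0γ⟩
          have hstep := Res.cons (s.min' hsne) hm₀M hside hres
          rwa [Finset.insert_erase hmA] at hstep
        · refine ⟨𝓡, M', γ, ?_, huni, h0γ⟩
          rw [Finset.erase_eq_of_notMem hmA] at hres hside
          exact Res.skip (s.min' hsne) hm₀M hside hres

lemma rankGE_zero_iff {ξ : Ordinal.{0}} {𝓛 : Set (Finset ℕ)} {M : Set ℕ}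
    (h𝓛 : IsUniform ξ 𝓛 M) (hM : M.Infinite) (A : Finset ℕ) :
    RankGE 𝓛 M A 0 ↔ A ∈ famSub 𝓛 := by
  constructor
  · rintro ⟨𝓡, M', γ, hres, huni, -⟩
    exact hres.mem_famSub (uniform_nonempty huni (hres.ground_infinite hM))
  · rintro ⟨s, hs, hA⟩
    exact rankGE_of_subset s.card h𝓛 hM s hs rfl A hA

lemma rankGE_step {ξ : Ordinal.{0}} {𝓛 : Set (Finset ℕ)} {M : Set ℕ}
    (h𝓛 : IsUniform ξ 𝓛 M) (hM : M.Infinite)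
    {B : Finset ℕ} {𝓡 : Set (Finset ℕ)} {M'' : Set ℕ} {γ : Ordinal.{0}}
    (hres : Res 𝓛 M B 𝓡 M'') (huni : IsUniform γ 𝓡 M'')
    {A : Finset ℕ} (hAB : A ⊆ B) (hne : (B \ A).Nonempty)
    (horder : ∀ b ∈ B, b ∉ A → ∀ a ∈ A, a < b) :
    RankGE 𝓛 M A (γ + 1) := by
  have hx₀mem : (B \ A).min' hne ∈ B \ A := Finset.min'_mem _ hne
  have hx₀B : (B \ A).min' hne ∈ B := (Finset.mem_sdiff.1 hx₀mem).1
  have hx₀A : (B \ A).min' hne ∉ A := (Finset.mem_sdiff.1 hx₀mem).2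
  obtain ⟨𝓢, M₀, h1, hx₀M₀, h3⟩ := hres.trunc _ hx₀B
  have hfilter : B.filter (· < (B \ A).min' hne) = A := by
    ext b
    simp only [Finset.mem_filter]
    constructor
    · rintro ⟨hbB, hbx⟩
      by_contra hbA
      exact absurd hbx (not_lt.2 (Finset.min'_le _ b (Finset.mem_sdiff.2 ⟨hbB, hbA⟩)))
    · intro hbA
      exact ⟨hAB hbA, horder _ hx₀B hx₀A b hbA⟩
  rw [hfilter] at h1
  have hM₀inf : M₀.Infinite := h1.ground_infinite hM
  rcases h1.uniform_or_empty ξ hM h𝓛 with h𝓢e | ⟨τ, hτ⟩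
  · exfalso
    have h𝓡e : 𝓡 = ∅ := h3.start_empty (by rw [h𝓢e, famAt_empty])
    obtain ⟨s, hs⟩ := uniform_nonempty huni (h3.ground_infinite (infinite_inter_Ioi hM₀inf _))
    rw [h𝓡e] at hs
    exact hs
  · rcases uniform_cases hτ _ hx₀M₀ with ⟨hτ0, h𝓢s⟩ | ⟨δ, hδτ, hδ⟩
    · exfalso
      have h𝓡e : 𝓡 = ∅ := h3.start_empty (by rw [h𝓢s, famAt_singleton])
      obtain ⟨s, hs⟩ := uniform_nonempty huni (h3.ground_infinite (infinite_inter_Ioi hM₀inf _))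
      rw [h𝓡e] at hs
      exact hs
    · have hγδ : γ ≤ δ := (h3.rank_le δ γ (infinite_inter_Ioi hM₀inf _) hδ huni).1
      refine ⟨𝓢, M₀, τ, h1, hτ, ?_⟩
      rw [Ordinal.add_one_eq_succ]
      exact Order.succ_le_of_lt (lt_of_le_of_lt hγδ hδτ)

lemma rankGE_limit_aux {ξ : Ordinal.{0}} {𝓛 : Set (Finset ℕ)} {M : Set ℕ}
    (h𝓛 : IsUniform ξ 𝓛 M) (hM : M.Infinite)
    (IH : ∀ m ∈ M, (M ∩ Set.Ioi m).Infinite → ∀ (A : Finset ℕ) (β : Ordinal.{0}), Order.IsSuccLimit β →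
      (∀ β' < β, RankGE (famAt 𝓛 m) (M ∩ Set.Ioi m) A β') →
      RankGE (famAt 𝓛 m) (M ∩ Set.Ioi m) A β)
    (A : Finset ℕ) (β : Ordinal.{0}) (hβ : Order.IsSuccLimit β)
    (hall : ∀ β' < β, RankGE 𝓛 M A β') : RankGE 𝓛 M A β := by
  classical
  rcases A.eq_empty_or_nonempty with rfl | hA
  · refine ⟨𝓛, M, ξ, Res.refl 𝓛 M, h𝓛, ?_⟩
    by_contra hcon
    push_neg at hcon
    have h2 : ξ + 1 < β := by
      rw [Ordinal.add_one_eq_succ]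
      exact hβ.succ_lt hcon
    obtain ⟨𝓡, M', γ, hres, huni, hγ⟩ := hall (ξ + 1) h2
    have hle := (hres.rank_le ξ γ hM h𝓛 huni).1
    have hcontra : ξ + 1 ≤ ξ := hγ.trans hle
    rw [Ordinal.add_one_eq_succ] at hcontra
    exact absurd hcontra (Order.lt_succ ξ).not_ge
  · have hclaim : ∃ m₀, m₀ ∈ M ∧ m₀ ≤ A.min' hA ∧
        ∀ β' < β, RankGE (famAt 𝓛 m₀) (M ∩ Set.Ioi m₀) (A.filter (fun a => m₀ < a)) β' := by
      by_contra hcon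
      push_neg at hcon
      have hsel : ∀ m₀ : ℕ, ∃ γ', γ' < β ∧
          (m₀ ∈ M → m₀ ≤ A.min' hA →
            ¬ RankGE (famAt 𝓛 m₀) (M ∩ Set.Ioi m₀) (A.filter (fun a => m₀ < a)) γ') := by
        intro m₀
        by_cases hc : m₀ ∈ M ∧ m₀ ≤ A.min' hA
        · obtain ⟨γ', hγ'β, hnot⟩ := hcon m₀ hc.1 hc.2
          exact ⟨γ', hγ'β, fun _ _ => hnot⟩
        · exact ⟨0, hβ.pos, fun h1 h2 => absurd ⟨h1, h2⟩ hc⟩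
      choose f hf1 hf2 using hsel
      obtain ⟨𝓡, M', γ, hres, huni, hγ⟩ :=
        hall ((Finset.range (A.min' hA + 1)).sup f) (by
          apply (Finset.sup_lt_iff (show ⊥ < β from by
            rw [Ordinal.bot_eq_zero]; exact hβ.pos)).2
          exact fun b _ => hf1 b)
      obtain ⟨m₀, hm₀, hminle, hres'⟩ := hres.inv_nonempty hA
      have hm₀le : m₀ ≤ A.min' hA := hminle _ (A.min'_mem hA)
      have hQ : RankGE (famAt 𝓛 m₀) (M ∩ Set.Ioi m₀) (A.filter (fun a => m₀ < a))
          ((Finset.range (A.min' hA + 1)).sup f) := ⟨𝓡, M', γ, hres', huni, hγ⟩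
      have hle : f m₀ ≤ (Finset.range (A.min' hA + 1)).sup f :=
        Finset.le_sup (Finset.mem_range.2 (Nat.lt_succ_of_le hm₀le))
      exact hf2 m₀ hm₀ hm₀le (hQ.mono hle)
    obtain ⟨m₀, hm₀M, hm₀le, hQ⟩ := hclaim
    have hQβ := IH m₀ hm₀M (infinite_inter_Ioi hM m₀) (A.filter (fun a => m₀ < a)) β hβ hQ
    obtain ⟨𝓡, M', γ, hres, huni, hγ⟩ := hQβ
    by_cases hmem : m₀ ∈ A
    · refine ⟨𝓡, M', γ, ?_, huni, hγ⟩
      have hstep := Res.cons m₀ hm₀M (fun a ha => (Finset.mem_filter.1 ha).2) hres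
      have he : insert m₀ (A.filter (fun a => m₀ < a)) = A := by
        ext a
        simp only [Finset.mem_insert, Finset.mem_filter]
        constructor
        · rintro (rfl | ⟨ha, _⟩)
          exacts [hmem, ha]
        · intro ha
          rcases eq_or_ne a m₀ with rfl | hne
          · exact Or.inl rfl
          · exact Or.inr ⟨ha, lt_of_le_of_ne (hm₀le.trans (A.min'_le a ha)) (Ne.symm hne)⟩
      rwa [he] at hstep
    · refine ⟨𝓡, M', γ, ?_, huni, hγ⟩
      have hord : ∀ a ∈ A, m₀ < a := by
        intro a ha
        rcases eq_or_ne a m₀ with rfl | hne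
        · exact absurd ha hmem
        · exact lt_of_le_of_ne (hm₀le.trans (A.min'_le a ha)) (Ne.symm hne)
      rw [Finset.filter_true_of_mem hord] at hres
      exact Res.skip m₀ hm₀M hord hres

lemma rankGE_limit {ξ : Ordinal.{0}} {𝓛 : Set (Finset ℕ)} {M : Set ℕ}
    (h𝓛 : IsUniform ξ 𝓛 M) :
    M.Infinite → ∀ (A : Finset ℕ) (β : Ordinal.{0}), Order.IsSuccLimit β →
      (∀ β' < β, RankGE 𝓛 M A β') → RankGE 𝓛 M A β := by
  induction h𝓛 with
  | zero M =>
      intro hM A β hβ hall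
      exfalso
      have h1β : (1 : Ordinal.{0}) < β := by
        have := hβ.succ_lt hβ.pos
        rwa [Ordinal.succ_zero] at this
      obtain ⟨𝓡, M', γ, hres, huni, hγ⟩ := hall 1 h1β
      have hle := (hres.rank_le 0 γ hM (IsUniform.zero M) huni).1
      have hcontra : (1 : Ordinal.{0}) ≤ 0 := hγ.trans hle
      simp at hcontra
  | succ ζ 𝓛 M hsub hne h IH =>
      intro hM A β hβ hall
      exact rankGE_limit_aux (IsUniform.succ ζ 𝓛 M hsub hne h) hM IH A β hβ hall
  | limit ξ₂ 𝓛 M hlim hsub hne ξm hmono hlt hsup h IH =>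
      intro hM A β hβ hall
      exact rankGE_limit_aux (IsUniform.limit ξ₂ 𝓛 M hlim hsub hne ξm hmono hlt hsup h) hM
        IH A β hβ hall

lemma CBDeriv_zero (F : Set (Finset ℕ)) (M : Set ℕ) : CBDeriv F M 0 = F :=
  Ordinal.limitRecOn_zero _ _ _

lemma CBDeriv_succ (F : Set (Finset ℕ)) (M : Set ℕ) (o : Ordinal.{0}) :
    CBDeriv F M (o + 1) = derivOne M (CBDeriv F M o) := by
  unfold CBDeriv
  rw [Ordinal.add_one_eq_succ, Ordinal.limitRecOn_succ]

lemma CBDeriv_limit (F : Set (Finset ℕ)) (M : Set ℕ) {o : Ordinal.{0}} (ho : Order.IsSuccLimit o) :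
    CBDeriv F M o = ⋂ (β : Ordinal.{0}) (_ : β < o), CBDeriv F M β := by
  unfold CBDeriv
  rw [Ordinal.limitRecOn_limit _ _ _ _ ho]

lemma derivOne_eq {ξ : Ordinal.{0}} {𝓛 : Set (Finset ℕ)} {M L : Set ℕ}
    (h𝓛 : IsUniform ξ 𝓛 M) (hM : M.Infinite) (hLM : L ⊆ M) (hLinf : L.Infinite)
    (G : Set (Finset ℕ)) (β : Ordinal.{0})
    (hmem : ∀ B : Finset ℕ, ↑B ⊆ L → (B ∈ G ↔ RankGE 𝓛 M B β)) :
    derivOne L G = {A : Finset ℕ | ↑A ⊆ L ∧ RankGE 𝓛 M A (β + 1)} := by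
  ext A
  simp only [derivOne, Set.mem_setOf_eq]
  constructor
  · rintro ⟨hAG, hAL, hacc⟩
    refine ⟨hAL, ?_⟩
    have hacc' := hacc L subset_rfl hLinf
    rw [accPt_iff_nhds] at hacc'
    obtain ⟨y, ⟨hy1, hy2⟩, hy3⟩ := hacc' _ (cyl_mem_nhds (toChar A) (A.sup id + 1))
    obtain ⟨B, hB, rfl⟩ := hy2
    have hchar : ∀ i < A.sup id + 1, (i ∈ B ↔ i ∈ A) := by
      intro i hi
      have := hy1 i hi
      simpa [toChar, decide_eq_decide] using this
    have hAB : A ⊆ B := fun a ha =>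
      (hchar a (Nat.lt_succ_of_le (Finset.le_sup (f := id) ha))).2 ha
    have hBA : B ≠ A := fun h => hy3 (by rw [h])
    have hdiff : (B \ A).Nonempty := by
      rw [Finset.sdiff_nonempty]
      intro hsub
      exact hBA (Finset.Subset.antisymm hsub hAB)
    have horder : ∀ b ∈ B, b ∉ A → ∀ a ∈ A, a < b := by
      intro b hbB hbA a haA
      have hb : ¬ b < A.sup id + 1 := fun hlt => hbA ((hchar b hlt).1 hbB)
      have ha : a ≤ A.sup id := Finset.le_sup (f := id) haA
      omega
    have hBL : ↑B ⊆ L := by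
      intro b hb
      rcases hB.2 hb with hb' | hb'
      · exact hAL hb'
      · exact hb'
    obtain ⟨𝓡, M'', γ, hres, huni, hβγ⟩ := (hmem B hBL).1 hB.1
    have hstep := rankGE_step h𝓛 hM hres huni hAB hdiff horder
    exact hstep.mono (add_le_add_left hβγ 1)
  · rintro ⟨hAL, hrk⟩
    have hrkβ : RankGE 𝓛 M A β := hrk.mono (le_self_add (a := β) (b := 1))
    refine ⟨(hmem A hAL).2 hrkβ, hAL, ?_⟩
    intro N hNL hNinf
    rw [accPt_iff_nhds]
    intro U hU
    obtain ⟨n, hcyl⟩ := exists_cyl_subset hU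
    obtain ⟨𝓡, M', γ, hres, huni, hβγ⟩ := hrk
    have hβltγ : β < γ :=
      lt_of_lt_of_le (by rw [Ordinal.add_one_eq_succ]; exact Order.lt_succ β) hβγ
    obtain ⟨a, haM'⟩ := hres.ground_cofinal
    have hNM'inf : (N ∩ M').Infinite := by
      apply Set.Infinite.mono (show N ∩ (Set.Ioi a) ⊆ N ∩ M' from ?_)
        (infinite_inter_Ioi hNinf a)
      intro x hx
      exact ⟨hx.1, haM' ⟨hLM (hNL hx.1), hx.2⟩⟩
    obtain ⟨x, hxNM', hnx, δ, hβδ, hδ⟩ :=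
      exists_child_rank huni hβltγ Set.inter_subset_right hNM'inf (max n (A.sup id))
    have hxn : n < x := lt_of_le_of_lt (le_max_left _ _) hnx
    have hxsup : A.sup id < x := lt_of_le_of_lt (le_max_right _ _) hnx
    have hxA : x ∉ A := fun h => absurd (Finset.le_sup (f := id) h) (not_le.2 hxsup)
    have hchain : Res 𝓛 M (A ∪ {x}) (famAt 𝓡 x) (M' ∩ Set.Ioi x) := by
      refine hres.append {x} _ _ ?_ ?_
      · have hcons := Res.cons (𝓛 := 𝓡) (M := M') (A := ∅) x hxNM'.2
          (by simp) (Res.refl _ _)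
        simpa using hcons
      · intro b hb
        rw [Finset.coe_singleton, Set.mem_singleton_iff] at hb
        rw [hb]
        exact hxNM'.2
    rw [Finset.union_comm, ← Finset.insert_eq] at hchain
    refine ⟨toChar (insert x A), ⟨?_, ?_⟩, ?_⟩
    · apply hcyl
      intro i hi
      have : (i ∈ insert x A) = (i ∈ A) := by
        simp only [Finset.mem_insert, eq_iff_iff]
        constructor
        · rintro (rfl | h)
          · omega
          · exact h
        · exact Or.inr
      simp only [toChar, this]
    · refine ⟨insert x A, ⟨?_, ?_⟩, rfl⟩
      · apply (hmem _ ?_).2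
        · exact ⟨famAt 𝓡 x, M' ∩ Set.Ioi x, δ, hchain, hδ, hβδ⟩
        · intro b hb
          rcases Finset.mem_insert.1 (by exact_mod_cast hb) with rfl | hbA
          · exact hNL hxNM'.1
          · exact hAL hbA
      · intro b hb
        rcases Finset.mem_insert.1 (by exact_mod_cast hb) with rfl | hbA
        · exact Or.inr hxNM'.1
        · exact Or.inl hbA
    · intro hcon
      have := toChar_injective hcon
      exact hxA (by rw [← this]; exact Finset.mem_insert_self x A)

lemma master {ξ : Ordinal.{0}} {𝓛 : Set (Finset ℕ)} {M L : Set ℕ}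
    (h𝓛 : IsUniform ξ 𝓛 M) (hM : M.Infinite) (hLM : L ⊆ M) (hLinf : L.Infinite) :
    ∀ β : Ordinal.{0}, β ≠ 0 →
      CBDeriv (famSub 𝓛) L β = {A : Finset ℕ | ↑A ⊆ L ∧ RankGE 𝓛 M A β} := by
  intro β
  induction β using Ordinal.induction with
  | h β IH =>
    intro hβ0
    rcases Ordinal.zero_or_succ_or_isSuccLimit β with rfl | ⟨β', rfl⟩ | hlim
    · exact absurd rfl hβ0
    · rw [← Ordinal.add_one_eq_succ]
      rw [CBDeriv_succ]
      rcases eq_or_ne β' 0 with rfl | hβ'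
      · rw [CBDeriv_zero]
        apply derivOne_eq h𝓛 hM hLM hLinf
        intro B hBL
        exact (rankGE_zero_iff h𝓛 hM B).symm
      · rw [IH β' (by rw [← Ordinal.add_one_eq_succ]; exact
          lt_of_lt_of_le (by rw [Ordinal.add_one_eq_succ]; exact Order.lt_succ β') le_rfl) hβ']
        apply derivOne_eq h𝓛 hM hLM hLinf
        intro B hBL
        simp only [Set.mem_setOf_eq]
        exact ⟨fun h => h.2, fun h => ⟨hBL, h⟩⟩
    · rw [CBDeriv_limit _ _ hlim]
      ext A
      simp only [Set.mem_iInter, Set.mem_setOf_eq]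
      constructor
      · intro hall
        have h1β : (1 : Ordinal.{0}) < β := by
          have := hlim.succ_lt hlim.pos
          rwa [Ordinal.succ_zero] at this
        have h1 := hall 1 h1β
        rw [IH 1 h1β one_ne_zero] at h1
        refine ⟨h1.1, rankGE_limit h𝓛 hM A β hlim ?_⟩
        intro β' hβ'
        rcases eq_or_ne β' 0 with rfl | hβ'0
        · exact h1.2.mono (zero_le (a := (1 : Ordinal.{0})))
        · have hmem := hall β' hβ'
          rw [IH β' hβ' hβ'0] at hmem
          exact hmem.2
      · rintro ⟨hAL, hrk⟩ β' hβ'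
        rcases eq_or_ne β' 0 with rfl | hβ'0
        · rw [CBDeriv_zero]
          exact (rankGE_zero_iff h𝓛 hM A).1 (hrk.mono (zero_le (a := β)))
        · rw [IH β' hβ' hβ'0]
          exact ⟨hAL, hrk.mono hβ'.le⟩

end Aux

/-- **Theorem 1.18.** If `ℒ` is a `ξ`-uniform family on `M`, then for every
infinite `L ⊆ M` we have `(ℒ_*)^ξ_L = {∅}` and `s_L(ℒ_*) = ξ + 1`. -/
theorem uniform_index (ξ : Ordinal.{0}) (hξ : ξ.card ≤ Cardinal.aleph0)
    (M : Set ℕ) (hM : M.Infinite)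
    (𝓛 : Set (Finset ℕ)) (h𝓛 : IsUniform ξ 𝓛 M) :
    ∀ L : Set ℕ, L ⊆ M → L.Infinite →
      CBDeriv (famSub 𝓛) L ξ = {(∅ : Finset ℕ)} ∧
        CBIndex (famSub 𝓛) L = ξ + 1 := by
  intro L hLM hLinf
  have hξ1 : ξ + 1 ≠ 0 := by
    rw [Ordinal.add_one_eq_succ]
    exact Ordinal.succ_ne_zero ξ
  have hder : CBDeriv (famSub 𝓛) L ξ = {(∅ : Finset ℕ)} := by
    rcases eq_or_ne ξ 0 with rfl | hξ0
    · rw [CBDeriv_zero]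
      have h𝓛e : 𝓛 = {(∅ : Finset ℕ)} := uniform_zero_aux h𝓛 rfl
      rw [h𝓛e]
      ext t
      simp only [famSub, Set.mem_setOf_eq, Set.mem_singleton_iff]
      constructor
      · rintro ⟨s, rfl, hts⟩
        exact Finset.subset_empty.1 hts
      · rintro rfl
        exact ⟨∅, rfl, Finset.Subset.refl ∅⟩
    · rw [master h𝓛 hM hLM hLinf ξ hξ0]
      ext A
      simp only [Set.mem_setOf_eq, Set.mem_singleton_iff]
      constructor
      · rintro ⟨hAL, hrk⟩
        by_contra hA
        have hAne : A.Nonempty := Finset.nonempty_iff_ne_empty.2 hA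
        obtain ⟨𝓡, M', γ, hres, huni, hγ⟩ := hrk
        have hlt := (hres.rank_le ξ γ hM h𝓛 huni).2 hAne
        exact absurd (hγ.trans_lt hlt) (lt_irrefl ξ)
      · rintro rfl
        exact ⟨by simp, ⟨𝓛, M, ξ, Res.refl 𝓛 M, h𝓛, le_rfl⟩⟩
  refine ⟨hder, ?_⟩
  have hsucc : CBDeriv (famSub 𝓛) L (ξ + 1) = ∅ := by
    rw [master h𝓛 hM hLM hLinf (ξ + 1) hξ1]
    ext A
    simp only [Set.mem_setOf_eq, Set.mem_empty_iff_false, iff_false, not_and]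
    intro hAL hrk
    obtain ⟨𝓡, M', γ, hres, huni, hγ⟩ := hrk
    rcases A.eq_empty_or_nonempty with rfl | hAne
    · have hle := (hres.rank_le ξ γ hM h𝓛 huni).1
      have hcontra : ξ + 1 ≤ ξ := hγ.trans hle
      rw [Ordinal.add_one_eq_succ] at hcontra
      exact absurd hcontra (Order.lt_succ ξ).not_ge
    · have hlt := (hres.rank_le ξ γ hM h𝓛 huni).2 hAne
      have hcontra : ξ + 1 < ξ + 1 := by
        calc ξ + 1 ≤ γ := hγ
        _ < ξ := hlt
        _ < ξ + 1 := by rw [Ordinal.add_one_eq_succ]; exact Order.lt_succ ξ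
      exact absurd hcontra (lt_irrefl _)
  unfold CBIndex
  apply le_antisymm
  · exact csInf_le' hsucc
  · apply le_csInf ⟨ξ + 1, hsucc⟩
    intro o ho
    by_contra hlt
    push_neg at hlt
    have hoξ : o ≤ ξ := by
      rw [Ordinal.add_one_eq_succ, Order.lt_succ_iff] at hlt
      exact hlt
    have hmem : (∅ : Finset ℕ) ∈ CBDeriv (famSub 𝓛) L o := by
      rcases eq_or_ne o 0 with rfl | ho0
      · rw [CBDeriv_zero]
        obtain ⟨s, hs⟩ := uniform_nonempty h𝓛 hM
        exact ⟨s, hs, Finset.empty_subset s⟩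
      · rw [master h𝓛 hM hLM hLinf o ho0]
        exact ⟨by simp, ⟨𝓛, M, ξ, Res.refl 𝓛 M, h𝓛, hoξ⟩⟩
    rw [ho] at hmem
    exact hmem
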